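/- Let P be a valid p-value (P(P ≤ s) ≤ s for all s ∈ [0,1]), P^a a [0,1]-valued random variable independent of P, U ~ Uniform(0,1) independent of (P^a, P), h : [0,1] → [0,1] a control function, and β ∈ (0,1). Define P^active = (1 - h(P^a))/β if U ≥ h(P^a), and P^active = (h(P^a)/(1-β))·P if U < h(P^a). Then P^active is a valid p-value: P(P^active ≤ s) ≤ s for all s ∈ [0,1]. -/

import Mathlib

open MeasureTheory Set ProbabilityTheory

lemma slice_measure (s t A B : ℝ) (ht : t ∈ Icc (0:ℝ) 1) :
    volume.restrict (Icc (0:ℝ) 1) {u : ℝ | (if u < t then A else B) ≤ s} =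
      (if A ≤ s then ENNReal.ofReal t else 0)
        + (if B ≤ s then ENNReal.ofReal (1 - t) else 0) := by
  obtain ⟨ht0, ht1⟩ := ht
  by_cases hA : A ≤ s <;> by_cases hB : B ≤ s
  · have hset : {u : ℝ | (if u < t then A else B) ≤ s} = univ := by
      ext u; by_cases hu : u < t <;> simp [hu, hA, hB]
    rw [hset, if_pos hA, if_pos hB]
    simp only [Measure.restrict_apply_univ, Real.volume_Icc]
    rw [← ENNReal.ofReal_add ht0 (by linarith)]
    norm_num
  · have hset : {u : ℝ | (if u < t then A else B) ≤ s} = Iio t := by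
      ext u; by_cases hu : u < t <;> simp [hu, hA, hB]
    rw [hset, if_pos hA, if_neg hB, add_zero,
      Measure.restrict_apply measurableSet_Iio]
    have : Iio t ∩ Icc (0:ℝ) 1 = Ico 0 t := by
      ext u; constructor
      · rintro ⟨h1, h2, h3⟩; exact ⟨h2, h1⟩
      · rintro ⟨h1, h2⟩; exact ⟨h2, h1, by linarith⟩
    rw [this, Real.volume_Ico, sub_zero]
  · have hset : {u : ℝ | (if u < t then A else B) ≤ s} = Ici t := by
      ext u; simp only [mem_setOf_eq, mem_Ici]
      by_cases hu : u < t
      · simp [hu, hA, not_le.mpr hu]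
      · simp [hu, hB, not_lt.mp hu]
    rw [hset, if_neg hA, if_pos hB, zero_add,
      Measure.restrict_apply measurableSet_Ici]
    have : Ici t ∩ Icc (0:ℝ) 1 = Icc t 1 := by
      ext u; constructor
      · rintro ⟨h1, _, h3⟩; exact ⟨h1, h3⟩
      · rintro ⟨h1, h2⟩; exact ⟨h1, by linarith, h2⟩
    rw [this, Real.volume_Icc]
  · have hset : {u : ℝ | (if u < t then A else B) ≤ s} = ∅ := by
      ext u; by_cases hu : u < t <;> simp [hu, hA, hB]
    rw [hset, if_neg hA, if_neg hB]
    simp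

/-- Validity of the active p-value under independence of `P` and `P^a`. -/
theorem active_pvalue_valid_indep
    {Ω : Type*} [MeasurableSpace Ω] (μ : Measure Ω) [IsProbabilityMeasure μ]
    (P Pa U : Ω → ℝ) (hPm : Measurable P) (hPam : Measurable Pa) (hUm : Measurable U)
    (hP : ∀ s ∈ Icc (0:ℝ) 1, μ {ω | P ω ≤ s} ≤ ENNReal.ofReal s)
    (hPa01 : ∀ ω, Pa ω ∈ Icc (0:ℝ) 1)
    (hUnif : μ.map U = volume.restrict (Icc (0:ℝ) 1))
    (hIndepPPa : IndepFun P Pa μ)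
    (hIndepU : IndepFun U (fun ω => (Pa ω, P ω)) μ)
    (h : ℝ → ℝ) (hhm : Measurable h) (hh01 : ∀ x, h x ∈ Icc (0:ℝ) 1)
    (β : ℝ) (hβ : β ∈ Ioo (0:ℝ) 1) :
    ∀ s ∈ Icc (0:ℝ) 1,
      μ {ω | (if U ω < h (Pa ω) then (h (Pa ω) / (1 - β)) * P ω
              else (1 - h (Pa ω)) / β) ≤ s} ≤ ENNReal.ofReal s := by
  intro s hs
  obtain ⟨hs0, hs1⟩ := hs
  obtain ⟨hβ0, hβ1⟩ := hβ
  have h1β : (0:ℝ) < 1 - β := by linarith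
  have hPaPm : Measurable fun ω => (Pa ω, P ω) := hPam.prodMk hPm
  -- the set on the product space
  set S : Set ((ℝ × ℝ) × ℝ) :=
    {q | (if q.2 < h q.1.1 then (h q.1.1 / (1 - β)) * q.1.2
          else (1 - h q.1.1) / β) ≤ s} with hSdef
  have hSm : MeasurableSet S := by
    have hf : Measurable fun q : (ℝ × ℝ) × ℝ =>
        (if q.2 < h q.1.1 then (h q.1.1 / (1 - β)) * q.1.2
          else (1 - h q.1.1) / β) := by
      apply Measurable.ite
      · exact measurableSet_lt measurable_snd (hhm.comp measurable_fst.fst)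
      · exact ((hhm.comp measurable_fst.fst).div_const _).mul measurable_fst.snd
      · exact (measurable_const.sub (hhm.comp measurable_fst.fst)).div_const _
    exact hf measurableSet_Iic
  have hmap_pair : μ.map (fun ω => ((Pa ω, P ω), U ω)) =
      (μ.map (fun ω => (Pa ω, P ω))).prod (μ.map U) :=
    (indepFun_iff_map_prod_eq_prod_map_map hPaPm.aemeasurable hUm.aemeasurable).mp
      hIndepU.symm
  have hmap_PaP : μ.map (fun ω => (Pa ω, P ω)) = (μ.map Pa).prod (μ.map P) :=
    (indepFun_iff_map_prod_eq_prod_map_map hPam.aemeasurable hPm.aemeasurable).mp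
      hIndepPPa.symm
  have hstep1 : μ {ω | (if U ω < h (Pa ω) then (h (Pa ω) / (1 - β)) * P ω
              else (1 - h (Pa ω)) / β) ≤ s}
      = (μ.map (fun ω => ((Pa ω, P ω), U ω))) S := by
    rw [Measure.map_apply (hPaPm.prodMk hUm) hSm]
    rfl
  rw [hstep1, hmap_pair, hUnif,
    Measure.prod_apply hSm]
  have hslice : ∀ x : ℝ × ℝ,
      volume.restrict (Icc (0:ℝ) 1) (Prod.mk x ⁻¹' S)
        = (if (h x.1 / (1 - β)) * x.2 ≤ s then ENNReal.ofReal (h x.1) else 0)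
          + (if (1 - h x.1) / β ≤ s then ENNReal.ofReal (1 - h x.1) else 0) := by
    intro x
    have : Prod.mk x ⁻¹' S =
        {u : ℝ | (if u < h x.1 then (h x.1 / (1 - β)) * x.2
          else (1 - h x.1) / β) ≤ s} := rfl
    rw [this, slice_measure s (h x.1) _ _ (hh01 x.1)]
  rw [lintegral_congr hslice]
  -- split the integral
  have hm1 : Measurable fun x : ℝ × ℝ =>
      (if (h x.1 / (1 - β)) * x.2 ≤ s then ENNReal.ofReal (h x.1) else 0) := by
    apply Measurable.ite
    · exact measurableSet_le (((hhm.comp measurable_fst).div_const _).mul measurable_snd)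
        measurable_const
    · exact (hhm.comp measurable_fst).ennreal_ofReal
    · exact measurable_const
  have hm2 : Measurable fun x : ℝ × ℝ =>
      (if (1 - h x.1) / β ≤ s then ENNReal.ofReal (1 - h x.1) else 0) := by
    apply Measurable.ite
    · exact measurableSet_le ((measurable_const.sub (hhm.comp measurable_fst)).div_const _)
        measurable_const
    · exact (measurable_const.sub (hhm.comp measurable_fst)).ennreal_ofReal
    · exact measurable_const
  rw [lintegral_add_left hm1]
  have hprob : IsProbabilityMeasure (μ.map (fun ω => (Pa ω, P ω))) :=
    Measure.isProbabilityMeasure_map hPaPm.aemeasurable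
  have hprobPa : IsProbabilityMeasure (μ.map Pa) :=
    Measure.isProbabilityMeasure_map hPam.aemeasurable
  -- second integral bound
  have hI2 : ∫⁻ x, (if (1 - h x.1) / β ≤ s then ENNReal.ofReal (1 - h x.1) else 0)
      ∂(μ.map (fun ω => (Pa ω, P ω))) ≤ ENNReal.ofReal (β * s) := by
    have hpt : ∀ x : ℝ × ℝ,
        (if (1 - h x.1) / β ≤ s then ENNReal.ofReal (1 - h x.1) else 0)
          ≤ ENNReal.ofReal (β * s) := by
      intro x
      by_cases hc : (1 - h x.1) / β ≤ s
      · rw [if_pos hc]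
        apply ENNReal.ofReal_le_ofReal
        rw [div_le_iff₀ hβ0] at hc
        linarith
      · rw [if_neg hc]; exact zero_le
    calc ∫⁻ x, (if (1 - h x.1) / β ≤ s then ENNReal.ofReal (1 - h x.1) else 0)
        ∂(μ.map (fun ω => (Pa ω, P ω)))
        ≤ ∫⁻ _, ENNReal.ofReal (β * s) ∂(μ.map (fun ω => (Pa ω, P ω))) :=
          lintegral_mono hpt
      _ = ENNReal.ofReal (β * s) := by rw [lintegral_const, measure_univ, mul_one]
  -- first integral bound
  have hI1 : ∫⁻ x, (if (h x.1 / (1 - β)) * x.2 ≤ s then ENNReal.ofReal (h x.1) else 0)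
      ∂(μ.map (fun ω => (Pa ω, P ω))) ≤ ENNReal.ofReal ((1 - β) * s) := by
    rw [hmap_PaP, lintegral_prod _ hm1.aemeasurable]
    have hinner : ∀ a : ℝ,
        ∫⁻ p, (if (h a / (1 - β)) * p ≤ s then ENNReal.ofReal (h a) else 0) ∂(μ.map P)
          ≤ ENNReal.ofReal ((1 - β) * s) := by
      intro a
      set t := h a with htdef
      have ht0 : 0 ≤ t := (hh01 a).1
      have ht1 : t ≤ 1 := (hh01 a).2
      have hIeq : ∫⁻ p, (if (t / (1 - β)) * p ≤ s then ENNReal.ofReal t else 0) ∂(μ.map P)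
          = ENNReal.ofReal t * (μ.map P) {p : ℝ | (t / (1 - β)) * p ≤ s} := by
        have hsm : MeasurableSet {p : ℝ | (t / (1 - β)) * p ≤ s} :=
          measurableSet_le (measurable_id.const_mul _) measurable_const
        rw [← lintegral_indicator_const hsm (ENNReal.ofReal t)]
        apply lintegral_congr
        intro p
        by_cases hc : (t / (1 - β)) * p ≤ s
        · simp [Set.indicator_apply, hc]
        · simp [Set.indicator_apply, hc]
      rw [hIeq]
      rcases eq_or_lt_of_le ht0 with ht0' | ht0'
      · rw [← ht0', ENNReal.ofReal_zero, zero_mul]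
        exact zero_le
      · -- t > 0
        have hsetP : {p : ℝ | (t / (1 - β)) * p ≤ s} = {p : ℝ | p ≤ s * (1 - β) / t} := by
          ext p
          simp only [mem_setOf_eq]
          rw [mul_comm, ← le_div_iff₀ (div_pos ht0' h1β), div_div_eq_mul_div]
        rw [hsetP]
        have hmapP : (μ.map P) {p : ℝ | p ≤ s * (1 - β) / t} = μ {ω | P ω ≤ s * (1 - β) / t} := by
          rw [show {p : ℝ | p ≤ s * (1 - β) / t} = Iic (s * (1 - β) / t) from rfl,
            Measure.map_apply hPm measurableSet_Iic]
          rfl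
        rw [hmapP]
        set c := s * (1 - β) / t with hcdef
        have hc0 : 0 ≤ c := by positivity
        by_cases hc1 : c ≤ 1
        · calc ENNReal.ofReal t * μ {ω | P ω ≤ c}
              ≤ ENNReal.ofReal t * ENNReal.ofReal c :=
                mul_le_mul_right (hP c ⟨hc0, hc1⟩) _
            _ = ENNReal.ofReal (t * c) := (ENNReal.ofReal_mul ht0).symm
            _ = ENNReal.ofReal ((1 - β) * s) := by
                congr 1
                rw [hcdef, mul_div_assoc', mul_comm t, mul_div_assoc, div_self ht0'.ne', mul_one]
                ring
        · have htle : t ≤ (1 - β) * s := by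
            have : (1:ℝ) < s * (1 - β) / t := not_le.mp hc1
            rw [lt_div_iff₀ ht0'] at this
            linarith
          calc ENNReal.ofReal t * μ {ω | P ω ≤ c}
              ≤ ENNReal.ofReal t * 1 := mul_le_mul_right prob_le_one _
            _ = ENNReal.ofReal t := mul_one _
            _ ≤ ENNReal.ofReal ((1 - β) * s) := ENNReal.ofReal_le_ofReal htle
    calc ∫⁻ a, ∫⁻ p, (if (h a / (1 - β)) * p ≤ s then ENNReal.ofReal (h a) else 0)
          ∂(μ.map P) ∂(μ.map Pa)
        ≤ ∫⁻ _, ENNReal.ofReal ((1 - β) * s) ∂(μ.map Pa) := lintegral_mono hinner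
      _ = ENNReal.ofReal ((1 - β) * s) := by rw [lintegral_const, measure_univ, mul_one]
  calc _ ≤ ENNReal.ofReal ((1 - β) * s) + ENNReal.ofReal (β * s) := add_le_add hI1 hI2
    _ = ENNReal.ofReal ((1 - β) * s + β * s) :=
        (ENNReal.ofReal_add (by positivity) (by positivity)).symm
    _ = ENNReal.ofReal s := by ring_nf
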